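/- arXiv:2502.14624 — 3 statements merged into one kernel-verified Lean document; each statement's English description precedes it below -/
import Mathlib

section
/- If K is a convex body in R^d whose Gaussian measure satisfies γ_d(K) ≥ 1/2 + ε for some ε > 0, then the closed Euclidean ball of radius ε centered at the origin is contained in K. -/
open MeasureTheory ProbabilityTheory
open scoped ENNReal NNReal

section Helpers

open ENNReal Real

lemma map_withDensity_measEquiv {α β : Type*} [MeasurableSpace α] [MeasurableSpace β]
    (μ : Measure α) (e : α ≃ᵐ β) (f : β → ℝ≥0∞) (hf : Measurable f) :
    (μ.withDensity (f ∘ e)).map e = (μ.map e).withDensity f := by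
  ext s hs
  rw [Measure.map_apply e.measurable hs, withDensity_apply _ (e.measurable hs),
    withDensity_apply _ hs, setLIntegral_map hs hf e.measurable]
  rfl

lemma prod_withDensity {α β : Type*} [MeasurableSpace α] [MeasurableSpace β]
    (μ : Measure α) (ν : Measure β) [SigmaFinite μ] [SigmaFinite ν]
    (f : α → ℝ≥0∞) (g : β → ℝ≥0∞) (hf : Measurable f) (hg : Measurable g)
    (h1 : SigmaFinite (μ.withDensity f)) (h2 : SigmaFinite (ν.withDensity g)) :
    (μ.withDensity f).prod (ν.withDensity g)
      = (μ.prod ν).withDensity (fun p => f p.1 * g p.2) := by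
  refine Measure.prod_eq fun s t hs ht => ?_
  rw [withDensity_apply _ (hs.prod ht), ← Measure.prod_restrict,
    lintegral_prod_mul hf.aemeasurable hg.aemeasurable,
    withDensity_apply _ hs, withDensity_apply _ ht]

lemma pi_map_eval {n : ℕ} (μ : Measure ℝ) [IsProbabilityMeasure μ] (j : Fin n) :
    (Measure.pi fun _ : Fin n => μ).map (fun y => y j) = μ := by
  ext s hs
  rw [Measure.map_apply (measurable_pi_apply j) hs]
  have hpre : (fun y : Fin n → ℝ => y j) ⁻¹' s
      = Set.pi Set.univ (Function.update (fun _ => Set.univ) j s) := Set.eval_preimage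
  rw [hpre, Measure.pi_pi]
  rw [Finset.prod_eq_single j (fun b _ hbj => by simp [Function.update_of_ne hbj])
    (by simp)]
  simp

lemma pi_gaussian_eq (n : ℕ) :
    (Measure.pi fun _ : Fin n => gaussianReal 0 1)
      = (Measure.pi fun _ : Fin n => (volume : Measure ℝ)).withDensity
          (fun x => ∏ i, gaussianPDF 0 1 (x i)) := by
  induction n with
  | zero =>
      have : (fun x : Fin 0 → ℝ => ∏ i, gaussianPDF 0 1 (x i)) = 1 := by
        funext x; simp
      rw [this, withDensity_one, Measure.pi_of_empty, Measure.pi_of_empty]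
  | succ n ih =>
      set e := MeasurableEquiv.piFinSuccAbove (fun _ : Fin (n+1) => ℝ) 0 with he
      have hgd : gaussianReal 0 1 = volume.withDensity (gaussianPDF 0 1) :=
        gaussianReal_of_var_ne_zero 0 one_ne_zero
      have hsf1 : SigmaFinite ((volume : Measure ℝ).withDensity (gaussianPDF 0 1)) := by
        rw [← hgd]; infer_instance
      have hsf2 : SigmaFinite ((Measure.pi fun _ : Fin n => (volume : Measure ℝ)).withDensity
          (fun x => ∏ i, gaussianPDF 0 1 (x i))) := by
        rw [← ih]; infer_instance
      have hmeasF : Measurable (fun x : Fin n → ℝ => ∏ i, gaussianPDF 0 1 (x i)) := by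
        exact Finset.measurable_prod _ fun i _ =>
          (measurable_gaussianPDF 0 1).comp (measurable_pi_apply i)
      have h1 : (Measure.pi fun _ : Fin (n+1) => gaussianReal 0 1)
          = ((gaussianReal 0 1).prod (Measure.pi fun _ : Fin n => gaussianReal 0 1)).map e.symm :=
        ((measurePreserving_piFinSuccAbove (fun _ : Fin (n+1) => gaussianReal 0 1) 0).symm
          e).map_eq.symm
      have h2 : ((Measure.pi fun _ : Fin (n+1) => (volume : Measure ℝ)).map e)
          = (volume : Measure ℝ).prod (Measure.pi fun _ : Fin n => (volume : Measure ℝ)) :=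
        (measurePreserving_piFinSuccAbove (fun _ : Fin (n+1) => (volume : Measure ℝ)) 0).map_eq
      rw [h1, ih, hgd, prod_withDensity _ _ _ _ (measurable_gaussianPDF 0 1) hmeasF hsf1 hsf2]
      have hFe : (fun p : ℝ × (Fin n → ℝ) => gaussianPDF 0 1 p.1 * ∏ i, gaussianPDF 0 1 (p.2 i))
          = (fun x : Fin (n+1) → ℝ => ∏ i, gaussianPDF 0 1 (x i)) ∘ e.symm := by
        funext p
        simp only [Function.comp_apply]
        rw [Fin.prod_univ_succAbove (fun i => gaussianPDF 0 1 (e.symm p i)) 0]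
        congr 1
      have hmeasF' : Measurable (fun x : Fin (n+1) → ℝ => ∏ i, gaussianPDF 0 1 (x i)) := by
        exact Finset.measurable_prod _ fun i _ =>
          (measurable_gaussianPDF 0 1).comp (measurable_pi_apply i)
      rw [hFe, map_withDensity_measEquiv _ e.symm _ hmeasF']
      congr 1
      rw [← h2, Measure.map_map e.symm.measurable e.measurable]
      simp

/-- The standard Gaussian density on Euclidean space, as a function of the norm. -/
noncomputable def stdGaussDensity (d : ℕ) : EuclideanSpace ℝ (Fin d) → ℝ≥0∞ :=
  fun y => ENNReal.ofReal ((Real.sqrt (2 * Real.pi))⁻¹ ^ d * Real.exp (-‖y‖ ^ 2 / 2))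

lemma measurable_stdGaussDensity (d : ℕ) : Measurable (stdGaussDensity d) := by
  apply Measurable.ennreal_ofReal
  exact (measurable_const.mul ((((measurable_norm.pow_const 2).neg).div_const 2).exp))

lemma stdGaussDensity_comp_symm (d : ℕ) (x : Fin d → ℝ) :
    (fun x : Fin d → ℝ => ∏ i, gaussianPDF 0 1 (x i)) x
      = (stdGaussDensity d ∘ (MeasurableEquiv.toLp 2 (Fin d → ℝ))) x := by
  simp only [Function.comp_apply, stdGaussDensity]
  simp only [gaussianPDF]
  rw [← ENNReal.ofReal_prod_of_nonneg (fun i _ => gaussianPDFReal_nonneg 0 1 (x i))]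
  congr 1
  have hnorm : ‖(MeasurableEquiv.toLp 2 (Fin d → ℝ)) x‖ ^ 2 = ∑ i, x i ^ 2 := by
    rw [EuclideanSpace.norm_eq]
    rw [Real.sq_sqrt (Finset.sum_nonneg fun i _ => sq_nonneg _)]
    simp [sq_abs]
  rw [hnorm]
  simp only [gaussianPDFReal]
  rw [Finset.prod_mul_distrib, Finset.prod_const]
  congr 1
  · norm_num
  · rw [← Real.exp_sum]
    congr 1
    rw [← Finset.sum_neg_distrib, Finset.sum_div]
    congr 1
    funext i
    push_cast
    ring

lemma euclid_gauss_eq (d : ℕ) :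
    (Measure.pi fun _ : Fin d => gaussianReal 0 1).map
        ⇑(EuclideanSpace.equiv (Fin d) ℝ).symm
      = (volume : Measure (EuclideanSpace ℝ (Fin d))).withDensity (stdGaussDensity d) := by
  have hcoe : ⇑(EuclideanSpace.equiv (Fin d) ℝ).symm
      = ⇑(MeasurableEquiv.toLp 2 (Fin d → ℝ)) := rfl
  rw [hcoe, pi_gaussian_eq, funext (stdGaussDensity_comp_symm d),
    map_withDensity_measEquiv _ _ _ (measurable_stdGaussDensity d),
    show (Measure.pi fun _ : Fin d => (volume : Measure ℝ)) = (volume : Measure (Fin d → ℝ))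
      from (MeasureTheory.volume_pi).symm,
    MeasurableEquiv.coe_toLp, (PiLp.volume_preserving_toLp (Fin d)).map_eq]

lemma gauss_map_isometry (d : ℕ)
    (L : EuclideanSpace ℝ (Fin d) ≃ₗᵢ[ℝ] EuclideanSpace ℝ (Fin d)) :
    ((volume : Measure (EuclideanSpace ℝ (Fin d))).withDensity (stdGaussDensity d)).map L
      = (volume : Measure (EuclideanSpace ℝ (Fin d))).withDensity (stdGaussDensity d) := by
  have he : ⇑L = ⇑(L.toHomeomorph.toMeasurableEquiv) := rfl
  have hG : stdGaussDensity d = (stdGaussDensity d) ∘ ⇑(L.toHomeomorph.toMeasurableEquiv) := by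
    funext y
    simp only [Function.comp_apply, stdGaussDensity]
    have hn : ‖(L.toHomeomorph.toMeasurableEquiv) y‖ = ‖y‖ := L.norm_map y
    rw [hn]
  rw [he]
  conv_lhs => rw [hG]
  rw [map_withDensity_measEquiv _ _ _ (measurable_stdGaussDensity d)]
  congr 1
  have := (L.measurePreserving).map_eq
  rw [← he] at *
  exact this

lemma gauss_map_inner (d : ℕ) (u : EuclideanSpace ℝ (Fin d)) (hu : ‖u‖ = 1) :
    ((Measure.pi fun _ : Fin d => gaussianReal 0 1).map
        ⇑(EuclideanSpace.equiv (Fin d) ℝ).symm).map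
      (fun y => (inner ℝ u y : ℝ)) = gaussianReal 0 1 := by
  have hd : d ≠ 0 := by
    rintro rfl
    have : u = 0 := Subsingleton.elim u 0
    rw [this, norm_zero] at hu; exact zero_ne_one hu
  set j : Fin d := ⟨0, Nat.pos_of_ne_zero hd⟩
  have horth : Orthonormal ℝ (Set.restrict {j} (fun _ : Fin d => u)) := by
    constructor
    · intro i
      exact hu
    · intro i k hik
      haveI := Set.uniqueSingleton j
      exact absurd (Subsingleton.elim i k) hik
  obtain ⟨b, hb⟩ := horth.exists_orthonormalBasis_extension_of_card_eq
    (by simp [finrank_euclideanSpace_fin])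
  have hbj : b j = u := hb j rfl
  have hcomp : (fun y : EuclideanSpace ℝ (Fin d) => (inner ℝ u y : ℝ))
      = (fun v : EuclideanSpace ℝ (Fin d) => v j) ∘ ⇑b.repr := by
    funext y
    simp only [Function.comp_apply]
    rw [← hbj, ← OrthonormalBasis.repr_apply_apply]
  have hmeval : Measurable (fun v : EuclideanSpace ℝ (Fin d) => v j) :=
    (measurable_pi_apply j).comp (MeasurableEquiv.toLp 2 (Fin d → ℝ)).symm.measurable
  rw [hcomp, ← Measure.map_map hmeval (b.repr.continuous.measurable)]
  rw [euclid_gauss_eq d, gauss_map_isometry d b.repr, ← euclid_gauss_eq d]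
  rw [Measure.map_map hmeval (EuclideanSpace.equiv (Fin d) ℝ).symm.continuous.measurable]
  have : ((fun v : EuclideanSpace ℝ (Fin d) => v j) ∘ ⇑(EuclideanSpace.equiv (Fin d) ℝ).symm)
      = (fun y : Fin d → ℝ => y j) := rfl
  rw [this, pi_map_eval]

lemma gauss_Iic_half : gaussianReal 0 1 (Set.Iic 0) = ENNReal.ofReal (1 / 2) := by
  set g1 := gaussianReal 0 1 with hg1
  have hmap : g1.map (fun x => (-1 : ℝ) * x) = g1 := by
    rw [hg1, gaussianReal_map_const_mul (-1)]
    norm_num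
  have hIci : g1 (Set.Ici 0) = g1 (Set.Iic 0) := by
    have hpre : (fun x : ℝ => (-1 : ℝ) * x) ⁻¹' (Set.Iic 0) = Set.Ici 0 := by
      ext z; simp
    calc g1 (Set.Ici 0) = g1 ((fun x : ℝ => (-1 : ℝ) * x) ⁻¹' (Set.Iic 0)) := by rw [hpre]
      _ = (g1.map (fun x => (-1 : ℝ) * x)) (Set.Iic 0) :=
        (Measure.map_apply (measurable_const_mul (-1)) measurableSet_Iic).symm
      _ = g1 (Set.Iic 0) := by rw [hmap]
  have h00 : g1 {0} = 0 :=
    gaussianReal_absolutelyContinuous 0 one_ne_zero (measure_singleton 0)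
  have hIoi : g1 (Set.Ioi 0) = g1 (Set.Iic 0) := by
    refine le_antisymm (le_trans (measure_mono Set.Ioi_subset_Ici_self) hIci.le) ?_
    rw [← hIci]
    calc g1 (Set.Ici 0) ≤ g1 (Set.Ioi 0 ∪ {0}) := by
          apply measure_mono; intro z hz
          rcases eq_or_lt_of_le (Set.mem_Ici.mp hz) with h | h
          · exact Or.inr (by simp [← h])
          · exact Or.inl h
      _ ≤ g1 (Set.Ioi 0) + g1 {0} := measure_union_le _ _
      _ = g1 (Set.Ioi 0) := by rw [h00, add_zero]
  have huniv : g1 (Set.Iic 0) + g1 (Set.Ioi 0) = 1 := by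
    rw [← measure_union (Set.Iic_disjoint_Ioi le_rfl) measurableSet_Ioi,
      Set.Iic_union_Ioi, measure_univ]
  rw [hIoi] at huniv
  have hne : g1 (Set.Iic 0) ≠ ⊤ := measure_ne_top _ _
  have htr : (g1 (Set.Iic 0)).toReal + (g1 (Set.Iic 0)).toReal = 1 := by
    rw [← ENNReal.toReal_add hne hne, huniv, ENNReal.toReal_one]
  rw [← ENNReal.ofReal_toReal hne]
  congr 1
  linarith

lemma gauss_Iic_lt {ε : ℝ} (hε : 0 < ε) :
    gaussianReal 0 1 (Set.Iic ε) < ENNReal.ofReal (1 / 2 + ε) := by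
  have hIoc : gaussianReal 0 1 (Set.Ioc 0 ε)
      ≤ ENNReal.ofReal (ε * (Real.sqrt (2 * Real.pi))⁻¹) := by
    rw [gaussianReal_apply _ one_ne_zero]
    have hpt : ∀ x : ℝ, gaussianPDF 0 1 x ≤ ENNReal.ofReal ((Real.sqrt (2 * Real.pi))⁻¹) := by
      intro x
      apply ENNReal.ofReal_le_ofReal
      unfold gaussianPDFReal
      push_cast
      rw [mul_one]
      apply mul_le_of_le_one_right (by positivity)
      rw [Real.exp_le_one_iff]
      have : (0:ℝ) ≤ (x - 0)^2 / (2*1) := by positivity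
      linarith
    calc ∫⁻ x in Set.Ioc 0 ε, gaussianPDF 0 1 x
        ≤ ∫⁻ _ in Set.Ioc 0 ε, ENNReal.ofReal ((Real.sqrt (2 * Real.pi))⁻¹) :=
          lintegral_mono fun x => hpt x
      _ = ENNReal.ofReal ((Real.sqrt (2 * Real.pi))⁻¹) * volume (Set.Ioc 0 ε) := by
          rw [setLIntegral_const]
      _ = ENNReal.ofReal (ε * (Real.sqrt (2 * Real.pi))⁻¹) := by
          rw [Real.volume_Ioc, sub_zero, ← ENNReal.ofReal_mul (by positivity), mul_comm]
  have hsplit : gaussianReal 0 1 (Set.Iic ε)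
      ≤ ENNReal.ofReal (1 / 2) + ENNReal.ofReal (ε * (Real.sqrt (2 * Real.pi))⁻¹) := by
    calc gaussianReal 0 1 (Set.Iic ε) = gaussianReal 0 1 (Set.Iic 0 ∪ Set.Ioc 0 ε) := by
          rw [Set.Iic_union_Ioc_eq_Iic hε.le]
      _ ≤ gaussianReal 0 1 (Set.Iic 0) + gaussianReal 0 1 (Set.Ioc 0 ε) := measure_union_le _ _
      _ ≤ _ := by rw [gauss_Iic_half]; exact add_le_add le_rfl hIoc
  refine lt_of_le_of_lt hsplit ?_
  rw [← ENNReal.ofReal_add (by norm_num) (by positivity)]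
  apply ENNReal.ofReal_lt_ofReal_iff (by positivity) |>.mpr
  have hsq : (1:ℝ) < Real.sqrt (2 * Real.pi) := by
    rw [show (1:ℝ) = Real.sqrt 1 from (Real.sqrt_one).symm]
    apply Real.sqrt_lt_sqrt (by norm_num)
    nlinarith [Real.pi_gt_three]
  have : ε * (Real.sqrt (2 * Real.pi))⁻¹ < ε := by
    apply mul_lt_of_lt_one_right hε
    rw [inv_lt_one_iff₀]
    right; exact hsq
  linarith

end Helpers

/-- If `K` is a convex body in `ℝ^d` whose Gaussian measure satisfies
`γ_d(K) ≥ 1/2 + ε` for some `ε > 0`, then the closed Euclidean ball of radius `ε`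
centered at the origin is contained in `K`. -/
theorem stmt0 (d : ℕ) (K : Set (EuclideanSpace ℝ (Fin d))) (hK : Convex ℝ K)
    (ε : ℝ) (hε : 0 < ε)
    (hmeas : ENNReal.ofReal (1 / 2 + ε) ≤
      ((Measure.pi fun _ : Fin d => gaussianReal 0 1).map
        ⇑(EuclideanSpace.equiv (Fin d) ℝ).symm) K) :
    Metric.closedBall (0 : EuclideanSpace ℝ (Fin d)) ε ⊆ K := by
  intro x hx
  by_contra hxK
  set μ := (Measure.pi fun _ : Fin d => gaussianReal 0 1).map
    ⇑(EuclideanSpace.equiv (Fin d) ℝ).symm with hμ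
  have hμd : μ = (volume : Measure (EuclideanSpace ℝ (Fin d))).withDensity (stdGaussDensity d) :=
    euclid_gauss_eq d
  have habs : μ ≪ (volume : Measure (EuclideanSpace ℝ (Fin d))) := by
    rw [hμd]; exact withDensity_absolutelyContinuous _ _
  have hpos : (0:ℝ≥0∞) < ENNReal.ofReal (1 / 2 + ε) :=
    ENNReal.ofReal_pos.mpr (by linarith)
  haveI : (volume : Measure (EuclideanSpace ℝ (Fin d))).IsAddHaarMeasure := by
    rw [← (stdOrthonormalBasis ℝ (EuclideanSpace ℝ (Fin d))).addHaar_eq_volume]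
    infer_instance
  by_cases hint : (interior K).Nonempty
  · obtain ⟨y0, hy0⟩ := hint
    obtain ⟨f, hf⟩ := geometric_hahn_banach_open_point hK.interior isOpen_interior
      (fun h => hxK (interior_subset h))
    have hKle : ∀ y ∈ K, f y ≤ f x := by
      intro y hy
      have hycl : y ∈ closure (interior K) := by
        have hc : Continuous (fun t : ℝ => y + t • (y0 - y)) := by continuity
        have htend : Filter.Tendsto (fun t : ℝ => y + t • (y0 - y))
            (nhdsWithin 0 (Set.Ioc (0:ℝ) 1)) (nhds y) := by
          have h0 : y + (0:ℝ) • (y0 - y) = y := by simp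
          have := hc.continuousAt (x := (0:ℝ))
          rw [ContinuousAt, h0] at this
          exact this.mono_left nhdsWithin_le_nhds
        haveI hne : (nhdsWithin (0:ℝ) (Set.Ioc (0:ℝ) 1)).NeBot := by
          apply mem_closure_iff_nhdsWithin_neBot.mp
          rw [closure_Ioc one_ne_zero.symm]
          exact Set.left_mem_Icc.mpr zero_le_one
        exact mem_closure_of_tendsto htend
          (eventually_nhdsWithin_of_forall
            (fun t ht => hK.add_smul_sub_mem_interior hy hy0 ht))
      have hcl : closure (interior K) ⊆ {z | f z ≤ f x} :=
        closure_minimal (fun z hz => (hf z hz).le)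
          (isClosed_le f.continuous continuous_const)
      exact hcl hycl
    set v := (InnerProductSpace.toDual ℝ (EuclideanSpace ℝ (Fin d))).symm f with hv
    have hvy : ∀ y, (inner ℝ v y : ℝ) = f y := fun y => InnerProductSpace.toDual_symm_apply
    have hvne : v ≠ 0 := by
      intro h
      have h1 : f y0 < f x := hf y0 hy0
      have hz : ∀ y, f y = 0 := fun y => by rw [← hvy y, h, inner_zero_left]
      rw [hz y0, hz x] at h1; exact lt_irrefl _ h1
    set u := ‖v‖⁻¹ • v with hu
    have hnu : ‖u‖ = 1 := by
      rw [hu, norm_smul, norm_inv, norm_norm, inv_mul_cancel₀ (norm_ne_zero_iff.mpr hvne)]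
    have hKsub : K ⊆ {y | (inner ℝ u y : ℝ) ≤ ε} := by
      intro y hy
      have h1 : (inner ℝ v y : ℝ) ≤ ‖v‖ * ε := by
        calc (inner ℝ v y : ℝ) = f y := hvy y
          _ ≤ f x := hKle y hy
          _ = (inner ℝ v x : ℝ) := (hvy x).symm
          _ ≤ ‖v‖ * ‖x‖ := real_inner_le_norm v x
          _ ≤ ‖v‖ * ε := by
              apply mul_le_mul_of_nonneg_left _ (norm_nonneg v)
              rwa [← mem_closedBall_zero_iff]
      show (inner ℝ u y : ℝ) ≤ ε
      rw [hu, real_inner_smul_left]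
      calc ‖v‖⁻¹ * (inner ℝ v y : ℝ) ≤ ‖v‖⁻¹ * (‖v‖ * ε) :=
          mul_le_mul_of_nonneg_left h1 (inv_nonneg.mpr (norm_nonneg v))
        _ = ε := by
          rw [← mul_assoc, inv_mul_cancel₀ (norm_ne_zero_iff.mpr hvne), one_mul]
    have hmeasu : Measurable (fun y : EuclideanSpace ℝ (Fin d) => (inner ℝ u y : ℝ)) :=
      (continuous_const.inner continuous_id).measurable
    have hfinal : μ K < ENNReal.ofReal (1 / 2 + ε) := by
      calc μ K ≤ μ {y | (inner ℝ u y : ℝ) ≤ ε} := measure_mono hKsub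
        _ = (μ.map (fun y => (inner ℝ u y : ℝ))) (Set.Iic ε) := by
            rw [Measure.map_apply hmeasu measurableSet_Iic]; rfl
        _ = gaussianReal 0 1 (Set.Iic ε) := by rw [hμ, gauss_map_inner d u hnu]
        _ < _ := gauss_Iic_lt hε
    exact absurd hmeas (not_le.mpr hfinal)
  · rw [Set.not_nonempty_iff_eq_empty] at hint
    have hfr : volume (closure K) = 0 := by
      have h := hK.addHaar_frontier (volume : Measure (EuclideanSpace ℝ (Fin d)))
      rwa [frontier, hint, Set.diff_empty] at h
    have hK0 : μ K = 0 := habs (measure_mono_null subset_closure hfr)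
    rw [hK0] at hmeas
    exact absurd hmeas (not_le.mpr hpos)
end

section
/- Fix positive integers L, K, c with L < K/(4e). Let Y_1, …, Y_K be i.i.d. random variables supported in [0,1]. Then Pr[ Σ_{i ≤ K−L} Y_i − Σ_{i > K−L} Y_i < −c ] ≤ 4 · (2eL/K)^{c+1}. -/
open MeasureTheory ProbabilityTheory Finset
open scoped ENNReal

open Finset

lemma card_filter_le_val (n m : ℕ) :
    ((Finset.univ.filter (fun i : Fin n => m ≤ (i : ℕ))).card) = n - m := by
  rw [← Nat.card_Ico m n]
  apply Finset.card_bij (fun (i : Fin n) _ => (i : ℕ))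
  · intro a ha
    simp only [Finset.mem_filter] at ha
    simp [Finset.mem_Ico, ha.2, a.isLt]
  · intro a _ b _ h
    exact Fin.val_injective h
  · intro b hb
    simp only [Finset.mem_Ico] at hb
    exact ⟨⟨b, hb.2⟩, by simp [hb.1], rfl⟩

lemma image_orderEmbOfFin_univ {K L : ℕ} (R : Finset (Fin K)) (hR : R.card = L) :
    Finset.image (R.orderEmbOfFin hR) Finset.univ = R := by
  apply Finset.coe_injective
  rw [Finset.coe_image, Finset.coe_univ, Set.image_univ, Finset.range_orderEmbOfFin]

/-- Claim C: if for every `j` with `c+1 ≤ j ≤ L` the set `R` has fewer than `j`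
elements among the top `2j-(c+1)` indices, then `∑_R y ≤ c + ∑_{Rᶜ} y`. -/
lemma claimC {K L c : ℕ} (h2L : 2 * L ≤ K) (y : Fin K → ℝ) (hmono : Monotone y)
    (hy0 : ∀ i, 0 ≤ y i) (hy1 : ∀ i, y i ≤ 1) (R : Finset (Fin K)) (hR : R.card = L)
    (H : ∀ j, c + 1 ≤ j → j ≤ L →
      ((R ∩ Finset.univ.filter (fun i : Fin K => K ≤ (i : ℕ) + (2 * j - (c + 1)))).card < j)) :
    ∑ i ∈ R, y i ≤ c + ∑ i ∈ Rᶜ, y i := by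
  rcases Nat.eq_zero_or_pos K with hK0 | hK0
  · subst hK0
    have hRe : R = ∅ := Finset.eq_empty_of_isEmpty R
    have hRce : (Rᶜ : Finset (Fin 0)) = ∅ := Finset.eq_empty_of_isEmpty _
    rw [hRe]
    rw [show (∅ᶜ : Finset (Fin 0)) = ∅ from Finset.eq_empty_of_isEmpty _]
    simp
  have hKL : 0 < K - L := by omega
  have hRc : (Rᶜ : Finset (Fin K)).card = K - L := by
    rw [Finset.card_compl, hR]; simp
  set a := R.orderEmbOfFin hR with ha
  set b := (Rᶜ : Finset (Fin K)).orderEmbOfFin hRc with hb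
  -- key1
  have key1 : ∀ k : Fin L, (k : ℕ) < L - c → (a k : ℕ) + 2 * L < K + 2 * (k : ℕ) + (c + 1) := by
    intro k hk
    by_contra hcon
    push_neg at hcon
    set j := L - (k : ℕ) with hj
    have hj1 : c + 1 ≤ j := by omega
    have hj2 : j ≤ L := by omega
    have hsub : Finset.image a (Finset.univ.filter (fun m : Fin L => (k : ℕ) ≤ (m : ℕ)))
        ⊆ R ∩ Finset.univ.filter (fun i : Fin K => K ≤ (i : ℕ) + (2 * j - (c + 1))) := by
      intro i hi
      simp only [Finset.mem_image, Finset.mem_filter, Finset.mem_univ, true_and] at hi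
      obtain ⟨m, hm, rfl⟩ := hi
      refine Finset.mem_inter.2 ⟨Finset.orderEmbOfFin_mem R hR m, ?_⟩
      simp only [Finset.mem_filter, Finset.mem_univ, true_and]
      have hmono' : (a k : ℕ) ≤ (a m : ℕ) :=
        Fin.le_def.mp (a.monotone (Fin.le_def.mpr hm))
      omega
    have hcard : (Finset.image a (Finset.univ.filter (fun m : Fin L => (k : ℕ) ≤ (m : ℕ)))).card
        = j := by
      rw [Finset.card_image_of_injective _ a.injective, card_filter_le_val]
    have := Finset.card_le_card hsub
    have := H j hj1 hj2
    omega
  -- mIdx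
  set mIdx : Fin L → Fin (K - L) :=
    fun k => ⟨(K + c + (k : ℕ) - 2 * L) % (K - L), Nat.mod_lt _ hKL⟩ with hmIdx
  have hmIdxval : ∀ k : Fin L, (k : ℕ) < L - c → (mIdx k : ℕ) = K + c + (k : ℕ) - 2 * L := by
    intro k hk
    simp only [hmIdx]
    exact Nat.mod_eq_of_lt (by omega)
  -- key2
  have key2 : ∀ k : Fin L, (k : ℕ) < L - c → a k < b (mIdx k) := by
    intro k hk
    set x := a k with hx
    have hIoi : (Finset.Ioi x).card = K - 1 - (x : ℕ) := Fin.card_Ioi x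
    have hRIoi : (R ∩ Finset.Ioi x).card = L - 1 - (k : ℕ) := by
      have himg : R ∩ Finset.Ioi x = Finset.image a (Finset.Ioi k) := by
        ext i
        simp only [Finset.mem_inter, Finset.mem_Ioi, Finset.mem_image]
        constructor
        · rintro ⟨hiR, hxi⟩
          have : i ∈ Finset.image a Finset.univ := by
            rw [_root_.image_orderEmbOfFin_univ R hR]; exact hiR
          simp only [Finset.mem_image, Finset.mem_univ, true_and] at this
          obtain ⟨m, rfl⟩ := this
          exact ⟨m, a.lt_iff_lt.mp hxi, rfl⟩
        · rintro ⟨m, hkm, rfl⟩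
          exact ⟨Finset.orderEmbOfFin_mem R hR m, a.lt_iff_lt.mpr hkm⟩
      rw [himg, Finset.card_image_of_injective _ a.injective, Fin.card_Ioi]
    have hsplit : (Finset.Ioi x ∩ R).card + (Finset.Ioi x \ R).card = (Finset.Ioi x).card :=
      Finset.card_inter_add_card_sdiff _ _
    have hcomplIoi : (Rᶜ ∩ Finset.Ioi x) = Finset.Ioi x \ R := by
      ext i; simp [Finset.mem_sdiff, Finset.mem_compl, and_comm]
    rw [Finset.inter_comm, hRIoi, hIoi] at hsplit
    by_contra hbt
    push_neg at hbt
    have hsub2 : Rᶜ ∩ Finset.Ioi x ⊆ Finset.image b (Finset.Ioi (mIdx k)) := by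
      intro i hi
      simp only [Finset.mem_inter, Finset.mem_Ioi] at hi
      have : i ∈ Finset.image b Finset.univ := by
        rw [_root_.image_orderEmbOfFin_univ _ hRc]; exact hi.1
      simp only [Finset.mem_image, Finset.mem_univ, true_and] at this
      obtain ⟨t, rfl⟩ := this
      have : b (mIdx k) < b t := lt_of_le_of_lt hbt hi.2
      exact Finset.mem_image.2 ⟨t, Finset.mem_Ioi.2 (b.lt_iff_lt.mp this), rfl⟩
    have hcard2 := Finset.card_le_card hsub2
    rw [Finset.card_image_of_injective _ b.injective, Fin.card_Ioi] at hcard2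
    have h1 := key1 k hk
    have hxK : (x : ℕ) < K := x.isLt
    have hkL : (k : ℕ) < L := k.isLt
    have hIv := hmIdxval k hk
    rw [hcomplIoi] at hcard2
    omega
  -- sums
  have hsum : ∑ i ∈ R, y i = ∑ k : Fin L, y (a k) := by
    rw [← _root_.image_orderEmbOfFin_univ R hR,
      Finset.sum_image (fun i _ j _ h => a.injective h)]
  have hsumc : ∑ i ∈ Rᶜ, y i = ∑ t : Fin (K - L), y (b t) := by
    rw [← _root_.image_orderEmbOfFin_univ _ hRc,
      Finset.sum_image (fun i _ j _ h => b.injective h)]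
  rw [hsum, hsumc]
  rw [← Finset.sum_filter_add_sum_filter_not Finset.univ (fun k : Fin L => (k : ℕ) < L - c)]
  have hpart1 : ∑ k ∈ Finset.univ.filter (fun k : Fin L => (k : ℕ) < L - c), y (a k)
      ≤ ∑ t : Fin (K - L), y (b t) := by
    calc ∑ k ∈ Finset.univ.filter (fun k : Fin L => (k : ℕ) < L - c), y (a k)
        ≤ ∑ k ∈ Finset.univ.filter (fun k : Fin L => (k : ℕ) < L - c), y (b (mIdx k)) := by
          apply Finset.sum_le_sum
          intro k hk
          simp only [Finset.mem_filter, Finset.mem_univ, true_and] at hk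
          exact hmono (le_of_lt (key2 k hk))
      _ = ∑ t ∈ (Finset.univ.filter (fun k : Fin L => (k : ℕ) < L - c)).image mIdx,
            y (b t) := by
          rw [Finset.sum_image]
          intro i hi j hj hij
          simp only [Finset.mem_coe, Finset.mem_filter, Finset.mem_univ, true_and] at hi hj
          have h1 := hmIdxval i hi
          have h2 := hmIdxval j hj
          have : (mIdx i : ℕ) = (mIdx j : ℕ) := by rw [hij]
          have : (i : ℕ) = (j : ℕ) := by omega
          exact Fin.val_injective this
      _ ≤ ∑ t : Fin (K - L), y (b t) := by
          apply Finset.sum_le_sum_of_subset_of_nonneg (Finset.subset_univ _)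
          intro t _ _
          exact hy0 _
  have hpart2 : ∑ k ∈ Finset.univ.filter (fun k : Fin L => ¬ ((k : ℕ) < L - c)), y (a k)
      ≤ (c : ℝ) := by
    have hcardf : (Finset.univ.filter (fun k : Fin L => ¬ ((k : ℕ) < L - c))).card
        = L - (L - c) := by
      have heq : (Finset.univ.filter (fun k : Fin L => ¬ ((k : ℕ) < L - c)))
          = (Finset.univ.filter (fun k : Fin L => L - c ≤ (k : ℕ))) := by
        ext k; simp [not_lt]
      rw [heq, card_filter_le_val]
    calc ∑ k ∈ Finset.univ.filter (fun k : Fin L => ¬ ((k : ℕ) < L - c)), y (a k)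
        ≤ ∑ _k ∈ Finset.univ.filter (fun k : Fin L => ¬ ((k : ℕ) < L - c)), (1 : ℝ) :=
          Finset.sum_le_sum fun k _ => hy1 _
      _ = ((L - (L - c) : ℕ) : ℝ) := by rw [Finset.sum_const, hcardf]; simp
      _ ≤ (c : ℝ) := by
          have : L - (L - c) ≤ c := by omega
          exact_mod_cast this
  linarith

lemma choose_le_two_pow' (n k : ℕ) : n.choose k ≤ 2 ^ n := by
  rcases le_or_gt k n with h | h
  · calc n.choose k ≤ ∑ m ∈ Finset.range (n + 1), n.choose m :=
      Finset.single_le_sum (fun m _ => Nat.zero_le _) (Finset.mem_range.2 (by omega))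
    _ = 2 ^ n := Nat.sum_range_choose n
  · rw [Nat.choose_eq_zero_of_lt h]; exact Nat.zero_le _

lemma card_contains {K j L : ℕ} (hjL : j ≤ L) (S : Finset (Fin K)) (hS : S.card = j) :
    (((Finset.powersetCard L (Finset.univ : Finset (Fin K))).filter
        (fun R => S ⊆ R)).card) = (K - j).choose (L - j) := by
  have hcompl : (Sᶜ : Finset (Fin K)).card = K - j := by
    rw [Finset.card_compl, hS]; simp
  have hbij : ((Finset.powersetCard L (Finset.univ : Finset (Fin K))).filter
      (fun R => S ⊆ R)).card = (Finset.powersetCard (L - j) (Sᶜ : Finset (Fin K))).card := by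
    apply Finset.card_bij' (fun R _ => R \ S) (fun A _ => A ∪ S)
    · intro R hR
      simp only [Finset.mem_filter, Finset.mem_powersetCard] at hR
      obtain ⟨⟨_, hcard⟩, hSR⟩ := hR
      rw [Finset.mem_powersetCard]
      constructor
      · intro x hx
        rw [Finset.mem_sdiff] at hx
        exact Finset.mem_compl.2 hx.2
      · rw [Finset.card_sdiff_of_subset hSR, hcard, hS]
    · intro A hA
      rw [Finset.mem_powersetCard] at hA
      obtain ⟨hAS, hAcard⟩ := hA
      have hdisj : Disjoint A S := by
        rw [Finset.disjoint_left]
        intro x hx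
        exact Finset.mem_compl.1 (hAS hx)
      simp only [Finset.mem_filter, Finset.mem_powersetCard]
      refine ⟨⟨Finset.subset_univ _, ?_⟩, Finset.subset_union_right⟩
      rw [Finset.card_union_of_disjoint hdisj, hAcard, hS]
      omega
    · intro R hR
      simp only [Finset.mem_filter] at hR
      exact Finset.sdiff_union_of_subset hR.2
    · intro A hA
      rw [Finset.mem_powersetCard] at hA
      have hdisj : Disjoint A S := by
        rw [Finset.disjoint_left]
        intro x hx
        exact Finset.mem_compl.1 (hA.1 hx)
      exact Finset.union_sdiff_cancel_right hdisj
  rw [hbij, Finset.card_powersetCard, hcompl]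

lemma choose_ratio {K L : ℕ} (hLK : L ≤ K) (hK : 0 < K) :
    ∀ j, j ≤ L → (((K - j).choose (L - j) : ℝ)) ≤ ((L : ℝ) / K) ^ j * (K.choose L) := by
  have hK' : (0 : ℝ) < (K : ℝ) := by exact_mod_cast hK
  intro j
  induction j with
  | zero => intro _; simp
  | succ j ih =>
    intro hj
    have hjL : j ≤ L := by omega
    have hIH := ih hjL
    have hnat : (K - j) * ((K - (j + 1)).choose (L - (j + 1)))
        = ((K - j).choose (L - j)) * (L - j) := by
      have h1 : K - j = Nat.succ (K - (j + 1)) := by omega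
      have h2 : L - j = Nat.succ (L - (j + 1)) := by omega
      rw [h1, h2]
      exact Nat.add_one_mul_choose_eq (K - (j + 1)) (L - (j + 1))
    have hjK' : (j : ℝ) < (K : ℝ) := by exact_mod_cast (by omega : j < K)
    have hjL' : (j : ℝ) ≤ (L : ℝ) := by exact_mod_cast hjL
    have hLK' : (L : ℝ) ≤ (K : ℝ) := by exact_mod_cast hLK
    have hKj : (0 : ℝ) < (K : ℝ) - j := by linarith
    have hcast : ((K - (j + 1)).choose (L - (j + 1)) : ℝ)
        = ((K - j).choose (L - j) : ℝ) * (((L : ℝ) - j) / ((K : ℝ) - j)) := by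
      have hc := congrArg (Nat.cast : ℕ → ℝ) hnat
      push_cast [Nat.cast_sub (show j ≤ K by omega), Nat.cast_sub hjL] at hc
      field_simp
      linarith
    rw [hcast]
    have hfrac0 : (0 : ℝ) ≤ ((L : ℝ) - j) / ((K : ℝ) - j) :=
      div_nonneg (by linarith) (le_of_lt hKj)
    have hfrac : ((L : ℝ) - j) / ((K : ℝ) - j) ≤ (L : ℝ) / K := by
      rw [div_le_div_iff₀ hKj hK']
      nlinarith
    calc ((K - j).choose (L - j) : ℝ) * (((L : ℝ) - j) / ((K : ℝ) - j))
        ≤ (((L : ℝ) / K) ^ j * (K.choose L)) * ((L : ℝ) / K) := by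
          apply mul_le_mul hIH hfrac hfrac0 (by positivity)
      _ = ((L : ℝ) / K) ^ (j + 1) * (K.choose L) := by ring

/-- Deterministic counting bound, monotone version. -/
lemma detD_mono {K L c : ℕ} (h8L : 8 * L ≤ K) (hK : 0 < K)
    (y : Fin K → ℝ) (hmono : Monotone y) (hy0 : ∀ i, 0 ≤ y i) (hy1 : ∀ i, y i ≤ 1) :
    ((((Finset.powersetCard L (Finset.univ : Finset (Fin K))).filter
        (fun R => ∑ i ∈ Rᶜ, y i - ∑ i ∈ R, y i < -(c : ℝ))).card : ℝ))
      ≤ 2 * (4 * (L : ℝ) / K) ^ (c + 1) * (K.choose L) := by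
  have hLK : L ≤ K := by omega
  have h2L : 2 * L ≤ K := by omega
  set P := Finset.powersetCard L (Finset.univ : Finset (Fin K)) with hP
  set topF : ℕ → Finset (Fin K) :=
    fun j => Finset.univ.filter (fun i : Fin K => K ≤ (i : ℕ) + (2 * j - (c + 1))) with htopF
  -- step 1 : covering
  have hcover : P.filter (fun R => ∑ i ∈ Rᶜ, y i - ∑ i ∈ R, y i < -(c : ℝ))
      ⊆ (Finset.Icc (c + 1) L).biUnion
          (fun j => P.filter (fun R => j ≤ (R ∩ topF j).card)) := by
    intro R hR
    simp only [Finset.mem_filter, hP, Finset.mem_powersetCard] at hR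
    obtain ⟨⟨-, hcard⟩, hbad⟩ := hR
    by_contra hnot
    simp only [Finset.mem_biUnion, Finset.mem_Icc, Finset.mem_filter, not_exists, not_and,
      not_le] at hnot
    have hH : ∀ j, c + 1 ≤ j → j ≤ L →
        ((R ∩ Finset.univ.filter
          (fun i : Fin K => K ≤ (i : ℕ) + (2 * j - (c + 1)))).card < j) := by
      intro j h1 h2
      exact hnot j ⟨h1, h2⟩ (by
        simp only [hP, Finset.mem_powersetCard]
        exact ⟨Finset.subset_univ _, hcard⟩)
    have := claimC h2L y hmono hy0 hy1 R hcard hH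
    linarith
  -- step 2 : cardinality estimates
  have hcount : ∀ j ∈ Finset.Icc (c + 1) L,
      ((P.filter (fun R => j ≤ (R ∩ topF j).card)).card : ℝ)
        ≤ (4 : ℝ) ^ j * (((L : ℝ) / K) ^ j * (K.choose L)) := by
    intro j hj
    rw [Finset.mem_Icc] at hj
    have hsub : P.filter (fun R => j ≤ (R ∩ topF j).card)
        ⊆ (Finset.powersetCard j (topF j)).biUnion
            (fun S => P.filter (fun R => S ⊆ R)) := by
      intro R hR
      simp only [Finset.mem_filter] at hR
      obtain ⟨hRP, hcard⟩ := hR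
      obtain ⟨S, hSsub, hScard⟩ := Finset.exists_subset_card_eq hcard
      refine Finset.mem_biUnion.2 ⟨S, ?_, ?_⟩
      · rw [Finset.mem_powersetCard]
        exact ⟨hSsub.trans (Finset.inter_subset_right), hScard⟩
      · exact Finset.mem_filter.2 ⟨hRP, hSsub.trans (Finset.inter_subset_left)⟩
    have htopcard : (topF j).card ≤ 2 * j - (c + 1) := by
      have heq : topF j
          = Finset.univ.filter (fun i : Fin K => K - (2 * j - (c + 1)) ≤ (i : ℕ)) := by
        ext i
        simp only [htopF, Finset.mem_filter, Finset.mem_univ, true_and]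
        omega
      rw [heq, card_filter_le_val]
      omega
    have hchoosebound : ((topF j).card.choose j) ≤ 4 ^ j := by
      calc (topF j).card.choose j ≤ (2 * j - (c + 1)).choose j :=
            Nat.choose_le_choose j htopcard
        _ ≤ 2 ^ (2 * j - (c + 1)) := choose_le_two_pow' _ _
        _ ≤ 2 ^ (2 * j) := Nat.pow_le_pow_right (by norm_num) (by omega)
        _ = 4 ^ j := by rw [pow_mul]; norm_num
    have hperS : ∀ S ∈ Finset.powersetCard j (topF j),
        (P.filter (fun R => S ⊆ R)).card = (K - j).choose (L - j) := by
      intro S hS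
      rw [Finset.mem_powersetCard] at hS
      exact card_contains hj.2 S hS.2
    have hstep : (P.filter (fun R => j ≤ (R ∩ topF j).card)).card
        ≤ 4 ^ j * ((K - j).choose (L - j)) := by
      calc (P.filter (fun R => j ≤ (R ∩ topF j).card)).card
          ≤ ((Finset.powersetCard j (topF j)).biUnion
              (fun S => P.filter (fun R => S ⊆ R))).card := Finset.card_le_card hsub
        _ ≤ ∑ S ∈ Finset.powersetCard j (topF j), (P.filter (fun R => S ⊆ R)).card :=
            Finset.card_biUnion_le
        _ = ∑ _S ∈ Finset.powersetCard j (topF j), (K - j).choose (L - j) :=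
            Finset.sum_congr rfl hperS
        _ = (Finset.powersetCard j (topF j)).card * ((K - j).choose (L - j)) := by
            rw [Finset.sum_const, smul_eq_mul]
        _ ≤ 4 ^ j * ((K - j).choose (L - j)) := by
            apply Nat.mul_le_mul_right
            rw [Finset.card_powersetCard]
            exact hchoosebound
    calc ((P.filter (fun R => j ≤ (R ∩ topF j).card)).card : ℝ)
        ≤ ((4 ^ j * ((K - j).choose (L - j)) : ℕ) : ℝ) := by exact_mod_cast hstep
      _ = (4 : ℝ) ^ j * (((K - j).choose (L - j) : ℕ) : ℝ) := by push_cast; ring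
      _ ≤ (4 : ℝ) ^ j * (((L : ℝ) / K) ^ j * (K.choose L)) := by
          apply mul_le_mul_of_nonneg_left (choose_ratio hLK hK j hj.2) (by positivity)
  -- assemble
  have hmain : ((P.filter (fun R => ∑ i ∈ Rᶜ, y i - ∑ i ∈ R, y i < -(c : ℝ))).card : ℝ)
      ≤ ∑ j ∈ Finset.Icc (c + 1) L, ((4 * (L : ℝ) / K) ^ j * (K.choose L)) := by
    calc ((P.filter (fun R => ∑ i ∈ Rᶜ, y i - ∑ i ∈ R, y i < -(c : ℝ))).card : ℝ)
        ≤ (((Finset.Icc (c + 1) L).biUnion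
            (fun j => P.filter (fun R => j ≤ (R ∩ topF j).card))).card : ℝ) := by
          exact_mod_cast Finset.card_le_card hcover
      _ ≤ ((∑ j ∈ Finset.Icc (c + 1) L,
            (P.filter (fun R => j ≤ (R ∩ topF j).card)).card : ℕ) : ℝ) := by
          exact_mod_cast Finset.card_biUnion_le
      _ = ∑ j ∈ Finset.Icc (c + 1) L,
            ((P.filter (fun R => j ≤ (R ∩ topF j).card)).card : ℝ) := by push_cast; rfl
      _ ≤ ∑ j ∈ Finset.Icc (c + 1) L, ((4 * (L : ℝ) / K) ^ j * (K.choose L)) := by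
          apply Finset.sum_le_sum
          intro j hj
          calc ((P.filter (fun R => j ≤ (R ∩ topF j).card)).card : ℝ)
              ≤ (4 : ℝ) ^ j * (((L : ℝ) / K) ^ j * (K.choose L)) := hcount j hj
            _ = (4 * (L : ℝ) / K) ^ j * (K.choose L) := by
                rw [mul_div_assoc, mul_pow]
                ring
  -- geometric bound
  set x : ℝ := 4 * (L : ℝ) / K with hx
  have hK' : (0 : ℝ) < K := by exact_mod_cast hK
  have hx0 : 0 ≤ x := by positivity
  have hxhalf : x ≤ 1 / 2 := by
    rw [hx, div_le_div_iff₀ hK' (by norm_num)]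
    have : (8 : ℝ) * L ≤ K := by exact_mod_cast h8L
    linarith
  have hgeom : ∑ j ∈ Finset.Icc (c + 1) L, x ^ j ≤ 2 * x ^ (c + 1) := by
    rcases lt_or_ge L (c + 1) with hLc | hLc
    · rw [Finset.Icc_eq_empty_of_lt hLc]
      simp
      positivity
    · have : Finset.Icc (c + 1) L = Finset.Ico (c + 1) (L + 1) := by
        rw [Finset.Ico_add_one_right_eq_Icc]
      rw [this, Finset.sum_Ico_eq_sum_range]
      have hrw : ∀ i, x ^ (c + 1 + i) = x ^ (c + 1) * x ^ i := fun i => pow_add x _ _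
      calc ∑ i ∈ Finset.range (L + 1 - (c + 1)), x ^ (c + 1 + i)
          = x ^ (c + 1) * ∑ i ∈ Finset.range (L + 1 - (c + 1)), x ^ i := by
            rw [Finset.mul_sum]
            exact Finset.sum_congr rfl fun i _ => hrw i
        _ ≤ x ^ (c + 1) * 2 := by
            apply mul_le_mul_of_nonneg_left _ (by positivity)
            have hxne : x ≠ 1 := by linarith
            rw [geom_sum_eq hxne]
            rw [div_le_iff_of_neg (by linarith : x - 1 < 0)]
            have hxpow : (0 : ℝ) ≤ x ^ (L + 1 - (c + 1)) := by positivity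
            nlinarith
        _ = 2 * x ^ (c + 1) := by ring
  calc ((P.filter (fun R => ∑ i ∈ Rᶜ, y i - ∑ i ∈ R, y i < -(c : ℝ))).card : ℝ)
      ≤ ∑ j ∈ Finset.Icc (c + 1) L, (x ^ j * (K.choose L)) := hmain
    _ = (∑ j ∈ Finset.Icc (c + 1) L, x ^ j) * (K.choose L) := by
        rw [Finset.sum_mul]
    _ ≤ (2 * x ^ (c + 1)) * (K.choose L) := by
        apply mul_le_mul_of_nonneg_right hgeom (by positivity)
    _ = 2 * x ^ (c + 1) * (K.choose L) := by ring

lemma image_equiv_compl {K : ℕ} (e : Equiv.Perm (Fin K)) (s : Finset (Fin K)) :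
    (s.image e)ᶜ = sᶜ.image e := by
  ext x
  constructor
  · intro h
    rw [Finset.mem_compl] at h
    rw [Finset.mem_image]
    refine ⟨e.symm x, ?_, e.apply_symm_apply x⟩
    rw [Finset.mem_compl]
    intro hs
    exact h (Finset.mem_image.2 ⟨e.symm x, hs, e.apply_symm_apply x⟩)
  · intro h
    obtain ⟨a, ha, rfl⟩ := Finset.mem_image.1 h
    rw [Finset.mem_compl] at ha ⊢
    intro hmem
    obtain ⟨b, hb, hba⟩ := Finset.mem_image.1 hmem
    exact ha (e.injective hba ▸ hb)

/-- Deterministic counting bound, general version. -/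
lemma detD {K L c : ℕ} (h8L : 8 * L ≤ K) (hK : 0 < K)
    (y : Fin K → ℝ) (hy0 : ∀ i, 0 ≤ y i) (hy1 : ∀ i, y i ≤ 1) :
    ((((Finset.powersetCard L (Finset.univ : Finset (Fin K))).filter
        (fun R => ∑ i ∈ Rᶜ, y i - ∑ i ∈ R, y i < -(c : ℝ))).card : ℝ))
      ≤ 2 * (4 * (L : ℝ) / K) ^ (c + 1) * (K.choose L) := by
  set σ := Tuple.sort y with hσ
  set z : Fin K → ℝ := y ∘ σ with hz
  have hmono : Monotone z := Tuple.monotone_sort y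
  have key : ∀ (e : Equiv.Perm (Fin K)) (f : Fin K → ℝ) (R : Finset (Fin K)),
      ∑ i ∈ R.image (e : Fin K → Fin K), f i = ∑ i ∈ R, f (e i) :=
    fun e f R => Finset.sum_image (fun a _ b _ h => e.injective h)
  have hmemP : ∀ (e : Equiv.Perm (Fin K)) (R : Finset (Fin K)),
      R ∈ Finset.powersetCard L (Finset.univ : Finset (Fin K)) →
      R.image (e : Fin K → Fin K) ∈ Finset.powersetCard L (Finset.univ : Finset (Fin K)) := by
    intro e R hR
    rw [Finset.mem_powersetCard] at hR ⊢
    exact ⟨Finset.subset_univ _, by rw [Finset.card_image_of_injective _ e.injective, hR.2]⟩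
  have hcardeq : ((Finset.powersetCard L (Finset.univ : Finset (Fin K))).filter
        (fun R => ∑ i ∈ Rᶜ, y i - ∑ i ∈ R, y i < -(c : ℝ))).card
      = ((Finset.powersetCard L (Finset.univ : Finset (Fin K))).filter
        (fun R => ∑ i ∈ Rᶜ, z i - ∑ i ∈ R, z i < -(c : ℝ))).card := by
    apply Finset.card_bij' (fun R _ => R.image (σ.symm : Fin K → Fin K))
      (fun R _ => R.image (σ : Fin K → Fin K))
    case hi =>
      intro R hR
      rw [Finset.mem_filter] at hR ⊢
      refine ⟨hmemP σ.symm R hR.1, ?_⟩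
      have h1 : ∑ i ∈ R.image (σ.symm : Fin K → Fin K), z i = ∑ i ∈ R, y i := by
        rw [key σ.symm z R]
        exact Finset.sum_congr rfl fun i _ => by simp [hz]
      have h2 : ∑ i ∈ (R.image (σ.symm : Fin K → Fin K))ᶜ, z i = ∑ i ∈ Rᶜ, y i := by
        rw [image_equiv_compl, key σ.symm z Rᶜ]
        exact Finset.sum_congr rfl fun i _ => by simp [hz]
      rw [h1, h2]
      exact hR.2
    case hj =>
      intro R hR
      rw [Finset.mem_filter] at hR ⊢
      refine ⟨hmemP σ R hR.1, ?_⟩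
      have h1 : ∑ i ∈ R.image (σ : Fin K → Fin K), y i = ∑ i ∈ R, z i := by
        rw [key σ y R]
        exact Finset.sum_congr rfl fun i _ => by simp [hz]
      have h2 : ∑ i ∈ (R.image (σ : Fin K → Fin K))ᶜ, y i = ∑ i ∈ Rᶜ, z i := by
        rw [image_equiv_compl, key σ y Rᶜ]
        exact Finset.sum_congr rfl fun i _ => by simp [hz]
      rw [h1, h2]
      exact hR.2
    case left_inv =>
      intro R _
      rw [Finset.image_image]
      simp
    case right_inv =>
      intro R _
      rw [Finset.image_image]
      simp
  rw [hcardeq]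
  exact detD_mono h8L hK z hmono (fun i => hy0 (σ i)) (fun i => hy1 (σ i))

/-- Distribution-agnostic concentration inequality: for i.i.d. `Y_1, …, Y_K` supported
in `[0,1]` and `L < K/(4e)`, the probability that the sum of the first `K - L` draws
minus the sum of the last `L` draws is below `-c` is at most `4 (2eL/K)^{c+1}`. -/
theorem stmt3 (L K c : ℕ) (hL : 0 < L) (hc : 0 < c)
    (hLK : (L : ℝ) < K / (4 * Real.exp 1))
    {Ω : Type*} [MeasurableSpace Ω] (μ : Measure Ω) [IsProbabilityMeasure μ]
    (Y : Fin K → Ω → ℝ)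
    (hmeas : ∀ i, Measurable (Y i))
    (hindep : iIndepFun Y μ)
    (hident : ∀ i j, IdentDistrib (Y i) (Y j) μ μ)
    (hrange : ∀ i, ∀ᵐ ω ∂μ, Y i ω ∈ Set.Icc (0 : ℝ) 1) :
    μ {ω | (∑ i ∈ Finset.univ.filter (fun i : Fin K => (i : ℕ) < K - L), Y i ω)
        - (∑ i ∈ Finset.univ.filter (fun i : Fin K => K - L ≤ (i : ℕ)), Y i ω)
        < -(c : ℝ)}
      ≤ ENNReal.ofReal (4 * (2 * Real.exp 1 * L / K) ^ (c + 1)) := by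
  classical
  -- numeric preliminaries
  have hexp : (2 : ℝ) < Real.exp 1 := by
    have := Real.exp_one_gt_d9
    linarith
  have hexp0 : (0 : ℝ) < Real.exp 1 := Real.exp_pos 1
  have hL' : (0 : ℝ) < (L : ℝ) := by exact_mod_cast hL
  have hK' : (0 : ℝ) < (K : ℝ) := by
    rcases div_pos_iff.1 (hL'.trans hLK) with ⟨h1, -⟩ | ⟨-, h2⟩
    · exact h1
    · nlinarith
  have hK0 : 0 < K := by exact_mod_cast hK'
  have h4e : 4 * Real.exp 1 * (L : ℝ) < K := by
    have h := (lt_div_iff₀ (by positivity : (0:ℝ) < 4 * Real.exp 1)).1 hLK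
    nlinarith
  have h8L : 8 * L ≤ K := by
    have h8 : (8 : ℝ) * L ≤ 4 * Real.exp 1 * L := by nlinarith
    have : ((8 * L : ℕ) : ℝ) < (K : ℝ) := by push_cast; nlinarith
    exact_mod_cast this.le
  -- the marginal distribution
  set ν : Measure ℝ := μ.map (Y ⟨0, hK0⟩) with hν
  haveI : IsProbabilityMeasure ν := Measure.isProbabilityMeasure_map (hmeas _).aemeasurable
  set Φ : Ω → (Fin K → ℝ) := fun ω i => Y i ω with hΦdef
  have hΦ : Measurable Φ := measurable_pi_lambda _ hmeas
  have hjoint : Measure.pi (fun _ : Fin K => ν) = μ.map Φ := by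
    apply Measure.pi_eq
    intro s hs
    rw [Measure.map_apply hΦ (MeasurableSet.univ_pi hs)]
    have hpre : Φ ⁻¹' (Set.pi Set.univ s) = ⋂ i ∈ (Finset.univ : Finset (Fin K)), Y i ⁻¹' s i := by
      ext ω
      simp [hΦdef, Set.mem_pi]
    rw [hpre, hindep.measure_inter_preimage_eq_mul Finset.univ (fun i _ => hs i)]
    apply Finset.prod_congr rfl
    intro i _
    rw [← Measure.map_apply (hmeas i) (hs i), (hident i ⟨0, hK0⟩).map_eq]
  -- event sets
  set R₀ : Finset (Fin K) := Finset.univ.filter (fun i : Fin K => K - L ≤ (i : ℕ)) with hR₀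
  have hR₀card : R₀.card = L := by
    rw [hR₀, card_filter_le_val]
    omega
  set S : Finset (Fin K) → Set (Fin K → ℝ) :=
    fun R => {f | ∑ i ∈ Rᶜ, f i - ∑ i ∈ R, f i < -(c : ℝ)} with hSdef
  have hSmeas : ∀ R, MeasurableSet (S R) := by
    intro R
    have hm : Measurable fun f : Fin K → ℝ => ∑ i ∈ Rᶜ, f i - ∑ i ∈ R, f i :=
      (Finset.measurable_sum _ fun i _ => measurable_pi_apply i).sub
        (Finset.measurable_sum _ fun i _ => measurable_pi_apply i)
    exact measurableSet_lt hm measurable_const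
  set E : Finset (Fin K) → Set Ω :=
    fun R => {ω | ∑ i ∈ Rᶜ, Y i ω - ∑ i ∈ R, Y i ω < -(c : ℝ)} with hEdef
  have hEmeas : ∀ R, MeasurableSet (E R) := by
    intro R
    have hm : Measurable fun ω => ∑ i ∈ Rᶜ, Y i ω - ∑ i ∈ R, Y i ω :=
      (Finset.measurable_sum _ fun i _ => hmeas i).sub
        (Finset.measurable_sum _ fun i _ => hmeas i)
    exact measurableSet_lt hm measurable_const
  have hμS : ∀ R : Finset (Fin K), μ (E R) = Measure.pi (fun _ : Fin K => ν) (S R) := by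
    intro R
    rw [hjoint, Measure.map_apply hΦ (hSmeas R)]
    rfl
  -- permutation invariance
  have hperm : ∀ R ∈ Finset.powersetCard L (Finset.univ : Finset (Fin K)),
      Measure.pi (fun _ : Fin K => ν) (S R) = Measure.pi (fun _ : Fin K => ν) (S R₀) := by
    intro R hRmem
    rw [Finset.mem_powersetCard] at hRmem
    obtain ⟨-, hRcard⟩ := hRmem
    have hcard1 : Fintype.card {x // x ∈ R₀} = Fintype.card {x // x ∈ R} := by
      simp only [Fintype.card_coe]
      rw [hRcard, hR₀card]
    have hcard2 : Fintype.card {x // ¬ x ∈ R₀} = Fintype.card {x // ¬ x ∈ R} := by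
      rw [Fintype.card_subtype_compl, Fintype.card_subtype_compl, hcard1]
    set e1 : {x // x ∈ R₀} ≃ {x // x ∈ R} := Fintype.equivOfCardEq hcard1 with he1
    set e2 : {x // ¬ x ∈ R₀} ≃ {x // ¬ x ∈ R} := Fintype.equivOfCardEq hcard2 with he2
    set σ : Equiv.Perm (Fin K) := Equiv.subtypeCongr e1 e2 with hσdef
    have hσmem : ∀ i : Fin K, σ i ∈ R ↔ i ∈ R₀ := by
      intro i
      by_cases h : i ∈ R₀
      · have hval : σ i = (e1 ⟨i, h⟩ : Fin K) := by
          simp [hσdef, Equiv.subtypeCongr, Equiv.sumCompl_symm_apply_of_pos h]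
        rw [hval]
        simpa [h] using (e1 ⟨i, h⟩).2
      · have hval : σ i = (e2 ⟨i, h⟩ : Fin K) := by
          simp [hσdef, Equiv.subtypeCongr, Equiv.sumCompl_symm_apply_of_neg h]
        rw [hval]
        simp only [h, iff_false]
        exact (e2 ⟨i, h⟩).2
    have himg : Finset.image (σ : Fin K → Fin K) R₀ = R := by
      apply Finset.eq_of_subset_of_card_le
      · intro x hx
        obtain ⟨i, hi, rfl⟩ := Finset.mem_image.1 hx
        exact (hσmem i).2 hi
      · rw [hRcard, Finset.card_image_of_injective _ σ.injective, hR₀card]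
    set T := MeasurableEquiv.piCongrLeft (fun _ : Fin K => ℝ) σ.symm with hTdef
    have hTf : ∀ (f : Fin K → ℝ) (i : Fin K), (T f) i = f (σ i) := by
      intro f i
      have h := MeasurableEquiv.piCongrLeft_apply_apply (β := fun _ : Fin K => ℝ) σ.symm f (σ i)
      rwa [Equiv.symm_apply_apply] at h
    have hTpre : T ⁻¹' (S R₀) = S R := by
      ext f
      simp only [Set.mem_preimage, hSdef, Set.mem_setOf_eq]
      have h1 : ∑ i ∈ R₀, (T f) i = ∑ i ∈ R, f i := by
        rw [← himg, Finset.sum_image (fun a _ b _ h => σ.injective h)]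
        exact Finset.sum_congr rfl fun i _ => hTf f i
      have h2 : ∑ i ∈ R₀ᶜ, (T f) i = ∑ i ∈ Rᶜ, f i := by
        rw [← himg, image_equiv_compl, Finset.sum_image (fun a _ b _ h => σ.injective h)]
        exact Finset.sum_congr rfl fun i _ => hTf f i
      rw [h1, h2]
    have hmp := measurePreserving_piCongrLeft (fun _ : Fin K => ν) σ.symm
    have := hmp.measure_preimage (hSmeas R₀).nullMeasurableSet
    rw [← hTpre, ← this]
  -- sum over all L-subsets
  set P := Finset.powersetCard L (Finset.univ : Finset (Fin K)) with hPdef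
  have hsumμ : ∑ R ∈ P, μ (E R) = (K.choose L : ℝ≥0∞) * μ (E R₀) := by
    have heach : ∀ R ∈ P, μ (E R) = μ (E R₀) := by
      intro R hR
      rw [hμS R, hperm R hR, ← hμS R₀]
    rw [Finset.sum_congr rfl heach, Finset.sum_const, hPdef, Finset.card_powersetCard,
      Finset.card_univ, Fintype.card_fin, nsmul_eq_mul]
  have hintegral : ∑ R ∈ P, μ (E R)
      = ∫⁻ ω, ∑ R ∈ P, (E R).indicator (1 : Ω → ℝ≥0∞) ω ∂μ := by
    rw [lintegral_finset_sum _ (fun R _ => measurable_one.indicator (hEmeas R))]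
    exact Finset.sum_congr rfl fun R _ => (lintegral_indicator_one (hEmeas R)).symm
  have hae : ∀ᵐ ω ∂μ, ∀ i, Y i ω ∈ Set.Icc (0 : ℝ) 1 := (MeasureTheory.ae_all_iff).2 hrange
  have hbound : ∀ᵐ ω ∂μ, ∑ R ∈ P, (E R).indicator (1 : Ω → ℝ≥0∞) ω
      ≤ ENNReal.ofReal (2 * (4 * (L : ℝ) / K) ^ (c + 1)) * (K.choose L : ℝ≥0∞) := by
    filter_upwards [hae] with ω hω
    have hcount : ∑ R ∈ P, (E R).indicator (1 : Ω → ℝ≥0∞) ω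
        = ((P.filter (fun R => ω ∈ E R)).card : ℝ≥0∞) := by
      simp only [Set.indicator_apply, Pi.one_apply]
      rw [Finset.sum_boole]
    rw [hcount]
    have hfeq : P.filter (fun R => ω ∈ E R)
        = P.filter (fun R => ∑ i ∈ Rᶜ, Y i ω - ∑ i ∈ R, Y i ω < -(c : ℝ)) := rfl
    have hdetD := detD (c := c) h8L hK0 (fun i => Y i ω)
      (fun i => (hω i).1) (fun i => (hω i).2)
    calc ((P.filter (fun R => ω ∈ E R)).card : ℝ≥0∞)
        = ENNReal.ofReal (((P.filter (fun R => ω ∈ E R)).card : ℝ)) := by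
          rw [ENNReal.ofReal_natCast]
      _ ≤ ENNReal.ofReal (2 * (4 * (L : ℝ) / K) ^ (c + 1) * (K.choose L : ℝ)) := by
          apply ENNReal.ofReal_le_ofReal
          rw [hfeq]
          exact hdetD
      _ = ENNReal.ofReal (2 * (4 * (L : ℝ) / K) ^ (c + 1)) * (K.choose L : ℝ≥0∞) := by
          rw [ENNReal.ofReal_mul (by positivity), ENNReal.ofReal_natCast]
  have hfinal : (K.choose L : ℝ≥0∞) * μ (E R₀)
      ≤ ENNReal.ofReal (2 * (4 * (L : ℝ) / K) ^ (c + 1)) * (K.choose L : ℝ≥0∞) := by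
    rw [← hsumμ, hintegral]
    calc ∫⁻ ω, ∑ R ∈ P, (E R).indicator (1 : Ω → ℝ≥0∞) ω ∂μ
        ≤ ∫⁻ _ω, ENNReal.ofReal (2 * (4 * (L : ℝ) / K) ^ (c + 1)) * (K.choose L : ℝ≥0∞) ∂μ :=
          lintegral_mono_ae hbound
      _ = ENNReal.ofReal (2 * (4 * (L : ℝ) / K) ^ (c + 1)) * (K.choose L : ℝ≥0∞) := by
          rw [lintegral_const, measure_univ, mul_one]
  have hchoose0 : (K.choose L : ℝ≥0∞) ≠ 0 := by
    exact_mod_cast (Nat.choose_pos (show L ≤ K by omega)).ne'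
  have hchoosetop : (K.choose L : ℝ≥0∞) ≠ ⊤ := ENNReal.natCast_ne_top _
  have hER₀ : μ (E R₀) ≤ ENNReal.ofReal (2 * (4 * (L : ℝ) / K) ^ (c + 1)) := by
    rw [mul_comm (ENNReal.ofReal _) ((K.choose L : ℝ≥0∞))] at hfinal
    exact (ENNReal.mul_le_mul_iff_right hchoose0 hchoosetop).1 hfinal
  -- identify the event in the statement with `E R₀`
  have hevent : {ω | (∑ i ∈ Finset.univ.filter (fun i : Fin K => (i : ℕ) < K - L), Y i ω)
        - (∑ i ∈ Finset.univ.filter (fun i : Fin K => K - L ≤ (i : ℕ)), Y i ω)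
        < -(c : ℝ)} = E R₀ := by
    have hcompl : R₀ᶜ = Finset.univ.filter (fun i : Fin K => (i : ℕ) < K - L) := by
      ext i
      simp only [hR₀, Finset.mem_compl, Finset.mem_filter, Finset.mem_univ, true_and, not_le]
    rw [hEdef]
    ext ω
    simp only [Set.mem_setOf_eq]
    rw [hcompl]
  rw [hevent]
  refine hER₀.trans (ENNReal.ofReal_le_ofReal ?_)
  -- final numeric comparison
  have hbase : (4 * (L : ℝ) / K) ≤ 2 * Real.exp 1 * (L : ℝ) / K := by
    gcongr
    nlinarith
  have hbase0 : (0 : ℝ) ≤ 4 * (L : ℝ) / K := by positivity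
  calc 2 * (4 * (L : ℝ) / K) ^ (c + 1)
      ≤ 2 * (2 * Real.exp 1 * (L : ℝ) / K) ^ (c + 1) := by
        apply mul_le_mul_of_nonneg_left (pow_le_pow_left₀ hbase0 hbase (c + 1)) (by norm_num)
    _ ≤ 4 * (2 * Real.exp 1 * (L : ℝ) / K) ^ (c + 1) := by
        apply mul_le_mul_of_nonneg_right (by norm_num) (by positivity)
end

section
/- Given real values a_1, …, a_k and b_1, …, b_ℓ in [0,1] and a real c ≥ 0, suppose that for every index i, the number of indices i' with a_{i'} ≥ a_i is at most c plus the number of indices i' with b_{i'} ≥ a_i. Then Σ_i a_i ≤ Σ_i b_i + c. -/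
set_option maxRecDepth 10000
open MeasureTheory

lemma stmt4_aux (x : ℝ) (h0 : 0 ≤ x) (h1 : x ≤ 1) :
    ∫ t in Set.Ioo (0:ℝ) 1, (if t < x then (1:ℝ) else 0) = x := by
  have : (fun t : ℝ => if t < x then (1:ℝ) else 0) = (Set.Iio x).indicator (fun _ => 1) := by
    ext t; simp [Set.indicator_apply, Set.mem_Iio]
  rw [this, setIntegral_indicator measurableSet_Iio]
  rw [Set.Ioo_inter_Iio, min_eq_right h1]
  simp [Real.volume_Ioo, h0]

lemma stmt4_int (x : ℝ) :
    IntegrableOn (fun t : ℝ => if t < x then (1:ℝ) else 0) (Set.Ioo 0 1) := by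
  have : (fun t : ℝ => if t < x then (1:ℝ) else 0) = (Set.Iio x).indicator (fun _ => 1) := by
    ext t; simp [Set.indicator_apply, Set.mem_Iio]
  rw [this]
  exact ((integrableOn_const_iff).mpr (Or.inr (by simp [Real.volume_Ioo]))).indicator measurableSet_Iio

/-- Hall-type sufficient condition for bounded envy: if for every `i` the number of
`a`-values at least `a i` is at most `c` plus the number of `b`-values at least `a i`,
then `Σ a ≤ Σ b + c`. -/
theorem stmt4 (k l : ℕ) (a : Fin k → ℝ) (b : Fin l → ℝ)
    (ha : ∀ i, a i ∈ Set.Icc (0 : ℝ) 1) (hb : ∀ i, b i ∈ Set.Icc (0 : ℝ) 1)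
    (c : ℝ) (hc : 0 ≤ c)
    (hcount : ∀ i : Fin k,
      ((Finset.univ.filter (fun i' : Fin k => a i ≤ a i')).card : ℝ)
        ≤ ((Finset.univ.filter (fun i' : Fin l => a i ≤ b i')).card : ℝ) + c) :
    (∑ i, a i) ≤ (∑ i, b i) + c := by
  classical
  set f : ℝ → ℝ := fun t => ∑ i : Fin k, (if t < a i then (1:ℝ) else 0) with hf
  set g : ℝ → ℝ := fun t => (∑ j : Fin l, (if t < b j then (1:ℝ) else 0)) + c with hg
  -- pointwise inequality
  have hpt : ∀ t : ℝ, f t ≤ g t := by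
    intro t
    by_cases hS : (Finset.univ.filter (fun i : Fin k => t < a i)).Nonempty
    · obtain ⟨i0, hi0, hmin⟩ := Finset.exists_min_image _ a hS
      simp only [Finset.mem_filter, Finset.mem_univ, true_and] at hi0
      have h1 : f t = ((Finset.univ.filter (fun i : Fin k => t < a i)).card : ℝ) := by
        rw [Finset.card_filter]
        push_cast
        rfl
      have h2 : (Finset.univ.filter (fun i : Fin k => t < a i)).card
          ≤ (Finset.univ.filter (fun i' : Fin k => a i0 ≤ a i')).card := by
        apply Finset.card_le_card
        intro i' hi'
        simp only [Finset.mem_filter, Finset.mem_univ, true_and] at *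
        exact hmin i' (by simpa using hi')
      have h3 : (Finset.univ.filter (fun i' : Fin l => a i0 ≤ b i')).card
          ≤ (Finset.univ.filter (fun j : Fin l => t < b j)).card := by
        apply Finset.card_le_card
        intro j hj
        simp only [Finset.mem_filter, Finset.mem_univ, true_and] at *
        exact lt_of_lt_of_le hi0 hj
      have h4 : g t = ((Finset.univ.filter (fun j : Fin l => t < b j)).card : ℝ) + c := by
        rw [Finset.card_filter]
        push_cast
        rfl
      rw [h1, h4]
      calc ((Finset.univ.filter (fun i : Fin k => t < a i)).card : ℝ)
          ≤ ((Finset.univ.filter (fun i' : Fin k => a i0 ≤ a i')).card : ℝ) := by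
            exact_mod_cast h2
        _ ≤ ((Finset.univ.filter (fun i' : Fin l => a i0 ≤ b i')).card : ℝ) + c := hcount i0
        _ ≤ ((Finset.univ.filter (fun j : Fin l => t < b j)).card : ℝ) + c :=
            add_le_add (by exact_mod_cast h3) le_rfl
    · have h1 : f t = 0 := by
        apply Finset.sum_eq_zero
        intro i _
        rw [if_neg]
        intro h
        exact hS ⟨i, by simp [h]⟩
      rw [h1]
      have : (0:ℝ) ≤ ∑ j : Fin l, (if t < b j then (1:ℝ) else 0) :=
        Finset.sum_nonneg fun j _ => by positivity
      show (0:ℝ) ≤ (∑ j : Fin l, (if t < b j then (1:ℝ) else 0)) + c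
      linarith
  have hfint : IntegrableOn f (Set.Ioo 0 1) :=
    integrable_finset_sum _ (fun i _ => stmt4_int (a i))
  have hgint : IntegrableOn g (Set.Ioo 0 1) :=
    (integrable_finset_sum _ (fun j _ => stmt4_int (b j))).add ((integrableOn_const_iff).mpr
      (Or.inr (by simp [Real.volume_Ioo])))
  have hmono : ∫ t in Set.Ioo (0:ℝ) 1, f t ≤ ∫ t in Set.Ioo (0:ℝ) 1, g t :=
    integral_mono hfint hgint (fun t => hpt t)
  have hfa : ∫ t in Set.Ioo (0:ℝ) 1, f t = ∑ i, a i := by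
    rw [hf, integral_finset_sum _ (fun i _ => stmt4_int (a i))]
    exact Finset.sum_congr rfl fun i _ => stmt4_aux (a i) (ha i).1 (ha i).2
  have hgb : ∫ t in Set.Ioo (0:ℝ) 1, g t = (∑ j, b j) + c := by
    rw [hg]
    rw [integral_add (integrable_finset_sum _ (fun j _ => stmt4_int (b j)))
      ((integrableOn_const_iff).mpr (Or.inr (by simp [Real.volume_Ioo])))]
    rw [integral_finset_sum _ (fun j _ => stmt4_int (b j))]
    have : ∫ _ in Set.Ioo (0:ℝ) 1, c = c := by
      simp [Real.volume_Ioo]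
    rw [this]
    congr 1
    exact Finset.sum_congr rfl fun j _ => stmt4_aux (b j) (hb j).1 (hb j).2
  rw [hfa, hgb] at hmono
  exact hmono
end
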